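/- Fix a prime p and a residue i. Let λ be a p-regular partition of n and ν a p-regular partition of n−1. Then ν is obtained from λ by removing the i-good node (the bottom i-normal node of λ) if and only if λ is obtained from ν by adding the i-cogood node (the top i-conormal node of ν). In this case, ε_i(ν) = ε_i(λ) − 1 and φ_i(ν) = φ_i(λ) + 1, where ε_i and φ_i denote the numbers of i-normal and i-conormal nodes respectively. -/

import Mathlib

/-- `l` (a partition written as a weakly decreasing function, rows 0-indexed)
has a removable node in row `r`, namely the node `(r+1, l r)` in 1-indexed coordinates. -/
def Rem (l : ℕ → ℕ) (r : ℕ) : Prop := l (r + 1) < l r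

/-- `l` has an addable node in row `r`, namely the node `(r+1, l r + 1)`. -/
def Addb (l : ℕ → ℕ) (r : ℕ) : Prop := r = 0 ∨ l r < l (r - 1)

instance (l : ℕ → ℕ) (r : ℕ) : Decidable (Rem l r) :=
  inferInstanceAs (Decidable (_ < _))

instance (l : ℕ → ℕ) (r : ℕ) : Decidable (Addb l r) :=
  inferInstanceAs (Decidable (_ ∨ _))

/-- The `p`-residue (column minus row, mod `p`) of the removable node in row `r`. -/
def remRes (p : ℕ) (l : ℕ → ℕ) (r : ℕ) : ZMod p := (l r : ZMod p) - (r : ZMod p) - 1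

/-- The `p`-residue of the addable node in row `r`. -/
def addRes (p : ℕ) (l : ℕ → ℕ) (r : ℕ) : ZMod p := (l r : ZMod p) - (r : ZMod p)

/-- The removable node in row `r` is normal: reading, from the bottom row towards the top,
the addable (`+`) and removable (`-`) nodes whose residue equals that of this node, and
recursively cancelling adjacent `-+` pairs, its `-` survives.  Equivalently, for every
segment of rows `[s, r)` lying above row `r`, the number of addable nodes of the same
residue in those rows is at most the number of removable nodes of the same residue there. -/
def NormalNode (p : ℕ) (l : ℕ → ℕ) (r : ℕ) : Prop :=
  Rem l r ∧ ∀ s ≤ r,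
    ((Finset.Ico s r).filter (fun t => Addb l t ∧ addRes p l t = remRes p l r)).card ≤
    ((Finset.Ico s r).filter (fun t => Rem l t ∧ remRes p l t = remRes p l r)).card

/-- The addable node in row `r` is conormal: in the same bottom-to-top reading with
`-+` cancellation, its `+` survives. -/
def ConormalNode (p : ℕ) (l : ℕ → ℕ) (r : ℕ) : Prop :=
  Addb l r ∧ ∀ s,
    ((Finset.Ioc r s).filter (fun t => Rem l t ∧ remRes p l t = addRes p l r)).card ≤
    ((Finset.Ioc r s).filter (fun t => Addb l t ∧ addRes p l t = addRes p l r)).card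


/-- Row `r` carries the `i`-good node of `l`: it is `i`-normal and is the bottom
(largest row index) `i`-normal node. -/
def GoodRow (p : ℕ) (l : ℕ → ℕ) (i : ZMod p) (r : ℕ) : Prop :=
  NormalNode p l r ∧ remRes p l r = i ∧ ∀ s, r < s → ¬(NormalNode p l s ∧ remRes p l s = i)

/-- Row `r` carries the `i`-cogood node of `l`: it is `i`-conormal and is the top
(smallest row index) `i`-conormal node. -/
def CogoodRow (p : ℕ) (l : ℕ → ℕ) (i : ZMod p) (r : ℕ) : Prop :=
  ConormalNode p l r ∧ addRes p l r = i ∧ ∀ s, s < r → ¬(ConormalNode p l s ∧ addRes p l s = i)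

namespace Stmt14Aux

def S (w : ℕ → ℤ) (s r : ℕ) : ℤ := ∑ t ∈ Finset.Ico s r, w t
def G (w : ℕ → ℤ) (r s : ℕ) : ℤ := ∑ t ∈ Finset.Ioc r s, w t

def Norm (w : ℕ → ℤ) (r : ℕ) : Prop := w r = -1 ∧ ∀ s ≤ r, S w s r ≤ 0
def Conorm (w : ℕ → ℤ) (r : ℕ) : Prop := w r = 1 ∧ ∀ s, 0 ≤ G w r s
def Good (w : ℕ → ℤ) (r : ℕ) : Prop := Norm w r ∧ ∀ s, r < s → ¬ Norm w s
def Cogood (w : ℕ → ℤ) (r : ℕ) : Prop := Conorm w r ∧ ∀ s, s < r → ¬ Conorm w s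

lemma G_eq (w : ℕ → ℤ) (r s : ℕ) : G w r s = S w (r+1) (s+1) := by
  rw [S, G, Finset.Ico_add_one_add_one_eq_Ioc]

lemma S_self (w : ℕ → ℤ) (r : ℕ) : S w r r = 0 := by simp [S]

lemma S_split (w : ℕ → ℤ) {s u r : ℕ} (h1 : s ≤ u) (h2 : u ≤ r) :
    S w s r = S w s u + S w u r := (Finset.sum_Ico_consecutive w h1 h2).symm

lemma S_succ_top (w : ℕ → ℤ) {s r : ℕ} (h : s ≤ r) : S w s (r+1) = S w s r + w r :=
  Finset.sum_Ico_succ_top h w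

lemma S_bot (w : ℕ → ℤ) {s r : ℕ} (h : s < r) : S w s r = w s + S w (s+1) r := by
  have h1 : S w s (s+1) = w s := by
    rw [S_succ_top w (le_refl s), S_self]; ring
  rw [S_split w (Nat.le_succ s) h, h1]

lemma G_zero (w : ℕ → ℤ) {r s : ℕ} (h : s ≤ r) : G w r s = 0 := by
  rw [G, Finset.Ioc_eq_empty (by omega), Finset.sum_empty]

/-- If `r` is normal and no row below `r` is normal, all the suffix sums below `r`
are nonnegative (and conversely). -/
lemma A1 (w : ℕ → ℤ) (r : ℕ) (hbd : ∀ t, w t = -1 ∨ w t = 0 ∨ w t = 1)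
    (hwr : w r = -1) (hF : ∀ s, s ≤ r → S w s r ≤ 0) :
    (∀ s, r < s → ¬ Norm w s) ↔ (∀ s, 0 ≤ G w r s) := by
  constructor
  · intro hno s
    by_contra hneg
    push_neg at hneg
    have hex : ∃ s, G w r s < 0 := ⟨s, hneg⟩
    classical
    set s0 := Nat.find hex with hs0def
    have hs0 : G w r s0 < 0 := Nat.find_spec hex
    have hmin : ∀ u, u < s0 → 0 ≤ G w r u := fun u hu => le_of_not_gt (Nat.find_min hex hu)
    clear_value s0
    have hrs0 : r < s0 := by
      by_contra h
      rw [G_zero w (le_of_not_gt h)] at hs0; omega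
    obtain ⟨u, rfl⟩ : ∃ u, s0 = u + 1 := ⟨s0 - 1, by omega⟩
    have hru : r ≤ u := by omega
    have hGu : 0 ≤ G w r u := hmin u (by omega)
    have hstep : G w r (u+1) = G w r u + w (u+1) := by
      rw [G_eq, G_eq, S_succ_top w (by omega)]
    have hw1 : w (u+1) = -1 := by rcases hbd (u+1) with h|h|h <;> omega
    have hGu0 : G w r u = 0 := by omega
    have hnorm : Norm w (u+1) := by
      refine ⟨hw1, fun v hv => ?_⟩
      by_cases hvr : v ≤ r
      · have e1 : S w v (u+1) = S w v (r+1) + S w (r+1) (u+1) :=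
          S_split w (by omega) (by omega)
        have e2 : S w v (r+1) = S w v r + w r := S_succ_top w hvr
        have e3 : S w (r+1) (u+1) = G w r u := (G_eq w r u).symm
        have := hF v hvr
        rw [e1, e2, e3, hwr, hGu0]; omega
      · push_neg at hvr
        rcases eq_or_lt_of_le hv with hveq | hvlt
        · rw [hveq, S_self]
        · have hvu : v ≤ u := by omega
          have hv1 : 1 ≤ v := by omega
          have e1 : S w (r+1) (u+1) = S w (r+1) v + S w v (u+1) :=
            S_split w (by omega) (by omega)
          have e2 : S w (r+1) v = G w r (v-1) := by
            rw [G_eq]; congr 1; omega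
          have e3 : 0 ≤ G w r (v-1) := hmin (v-1) (by omega)
          have e4 : S w (r+1) (u+1) = G w r u := (G_eq w r u).symm
          omega
    exact hno (u+1) (by omega) hnorm
  · intro hG s hrs hN
    have h1 : S w (r+1) s ≤ 0 := hN.2 (r+1) hrs
    have h2 : G w r s = S w (r+1) s + w s := by
      rw [G_eq, S_succ_top w hrs]
    have := hG s
    rw [h2, hN.1] at this; omega

/-- Dual statement: given the conormal data at `r` (for a word with `v r = 1`),
no row above `r` is conormal iff all prefix sums above `r` are nonpositive. -/
lemma A2 (v : ℕ → ℤ) (r : ℕ) (hbd : ∀ t, t ≠ r → (v t = -1 ∨ v t = 0 ∨ v t = 1))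
    (hvr : v r = 1) (hG : ∀ s, 0 ≤ G v r s) :
    (∀ s, s < r → ¬ Conorm v s) ↔ (∀ s, s ≤ r → S v s r ≤ 0) := by
  classical
  constructor
  · intro hno s hsr
    by_contra hpos
    push_neg at hpos
    set P : ℕ → Prop := fun u => 0 < S v u r with hP
    set s0 := Nat.findGreatest P r with hs0def
    have hPs : P s := hpos
    have hs0P : P s0 := Nat.findGreatest_spec hsr hPs
    have hs0le : s0 ≤ r := Nat.findGreatest_le r
    have hs0r : s0 < r := by
      rcases eq_or_lt_of_le hs0le with h | h
      · exfalso; rw [hP] at hs0P; rw [h, S_self] at hs0P; omega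
      · exact h
    have hle : ∀ k, s0 < k → k ≤ r → S v k r ≤ 0 := by
      intro k h1 h2
      rcases eq_or_lt_of_le h2 with rfl | hk
      · rw [S_self]
      · exact le_of_not_gt (Nat.findGreatest_is_greatest h1 h2)
    have hsplit : S v s0 r = v s0 + S v (s0+1) r := S_bot v hs0r
    have hnext : S v (s0+1) r ≤ 0 := hle (s0+1) (by omega) (by omega)
    have hv1 : v s0 = 1 := by
      rcases hbd s0 (by omega) with h|h|h <;> rw [hP] at hs0P <;> omega
    have hnext0 : S v (s0+1) r = 0 := by rw [hP] at hs0P; omega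
    have hco : Conorm v s0 := by
      refine ⟨hv1, fun u => ?_⟩
      by_cases hu : u ≤ s0
      · rw [G_zero v hu]
      · push_neg at hu
        have e1 : G v s0 u = S v (s0+1) (u+1) := G_eq v s0 u
        by_cases hur : u + 1 ≤ r
        · have e2 : S v (s0+1) r = S v (s0+1) (u+1) + S v (u+1) r :=
            S_split v (by omega) hur
          have e3 : S v (u+1) r ≤ 0 := hle (u+1) (by omega) hur
          omega
        · push_neg at hur
          have e2 : S v (s0+1) (u+1) = S v (s0+1) r + S v r (u+1) :=
            S_split v (by omega) (by omega)
          have e3 : S v r (u+1) = v r + S v (r+1) (u+1) := S_bot v (by omega)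
          have e4 : S v (r+1) (u+1) = G v r u := (G_eq v r u).symm
          have e5 : 0 ≤ G v r u := hG u
          rw [e1, e2, e3, e4, hvr, hnext0]; omega
    exact hno s0 hs0r hco
  · intro hF s hsr hC
    have h1 : S v s r = v s + S v (s+1) r := S_bot v hsr
    have h2 : S v (s+1) r = G v s (r-1) := by rw [G_eq]; congr 1; omega
    have h3 : 0 ≤ G v s (r-1) := hC.2 (r-1)
    have h4 := hF s (le_of_lt hsr)
    rw [hC.1] at h1; omega

section Update
variable (w w' : ℕ → ℤ) (r : ℕ)

lemma S_agree (hagree : ∀ t, t ≠ r → w' t = w t) {s u : ℕ}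
    (h : r ∉ Finset.Ico s u) : S w' s u = S w s u :=
  Finset.sum_congr rfl (fun t ht => hagree t (fun he => h (he ▸ ht)))

lemma G_agree (hagree : ∀ t, t ≠ r → w' t = w t) {s u : ℕ}
    (h : r ∉ Finset.Ioc s u) : G w' s u = G w s u :=
  Finset.sum_congr rfl (fun t ht => hagree t (fun he => h (he ▸ ht)))

variable (hbd : ∀ t, w t = -1 ∨ w t = 0 ∨ w t = 1)
  (hwr : w r = -1) (hw'r : w' r = 1) (hagree : ∀ t, t ≠ r → w' t = w t)

include hbd hwr hw'r hagree

lemma hbd' : ∀ t, t ≠ r → (w' t = -1 ∨ w' t = 0 ∨ w' t = 1) := by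
  intro t ht; rw [hagree t ht]; exact hbd t

lemma tS : ∀ s, S w' s r = S w s r := by
  intro s; exact S_agree w w' r hagree (by simp)

lemma tG : ∀ s, G w' r s = G w r s := by
  intro s; exact G_agree w w' r hagree (by simp)

lemma goodCogood : Good w r ↔ Cogood w' r := by
  constructor
  · rintro ⟨⟨_, hF⟩, hno⟩
    have hG : ∀ s, 0 ≤ G w r s := (A1 w r hbd hwr hF).mp hno
    have hG' : ∀ s, 0 ≤ G w' r s := by
      intro s; rw [tG w w' r hbd hwr hw'r hagree]; exact hG s
    refine ⟨⟨hw'r, hG'⟩, ?_⟩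
    exact (A2 w' r (hbd' w w' r hbd hwr hw'r hagree) hw'r hG').mpr
      (fun s hs => by rw [tS w w' r hbd hwr hw'r hagree]; exact hF s hs)
  · rintro ⟨⟨_, hG'⟩, hno'⟩
    have hG : ∀ s, 0 ≤ G w r s := by
      intro s; rw [← tG w w' r hbd hwr hw'r hagree]; exact hG' s
    have hF' : ∀ s, s ≤ r → S w' s r ≤ 0 :=
      (A2 w' r (hbd' w w' r hbd hwr hw'r hagree) hw'r hG').mp hno'
    have hF : ∀ s, s ≤ r → S w s r ≤ 0 := by
      intro s hs; rw [← tS w w' r hbd hwr hw'r hagree]; exact hF' s hs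
    exact ⟨⟨hwr, hF⟩, (A1 w r hbd hwr hF).mpr hG⟩

lemma B1 (hGood : Good w r) : ∀ s, Norm w' s ↔ (Norm w s ∧ s ≠ r) := by
  intro s
  by_cases hs : s = r
  · subst hs
    constructor
    · rintro ⟨h1, -⟩; rw [hw'r] at h1; omega
    · rintro ⟨-, h⟩; exact absurd rfl h
  · rcases lt_or_gt_of_ne hs with hlt | hgt
    · constructor
      · rintro ⟨h1, h2⟩
        refine ⟨⟨by rw [← hagree s hs]; exact h1, fun u hu => ?_⟩, hs⟩
        rw [← S_agree w w' r hagree (by simp; omega)]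
        exact h2 u hu
      · rintro ⟨⟨h1, h2⟩, -⟩
        refine ⟨by rw [hagree s hs]; exact h1, fun u hu => ?_⟩
        rw [S_agree w w' r hagree (by simp; omega)]
        exact h2 u hu
    · have hG : ∀ u, 0 ≤ G w r u := (A1 w r hbd hwr hGood.1.2).mp hGood.2
      constructor
      · rintro ⟨h1, h2⟩
        exfalso
        have e1 : S w' (r+1) s ≤ 0 := h2 (r+1) hgt
        have e2 : S w (r+1) s ≤ 0 := by
          rw [← S_agree w w' r hagree (by simp)]; exact e1
        have e3 : w s = -1 := by rw [← hagree s hs]; exact h1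
        have e4 : G w r s = S w (r+1) s + w s := by
          rw [G_eq, S_succ_top w hgt]
        have := hG s
        omega
      · rintro ⟨hN, -⟩
        exact absurd hN (hGood.2 s hgt)

lemma B2 (hGood : Good w r) : (∀ s, Conorm w' s ↔ (s = r ∨ Conorm w s)) := by
  have hG : ∀ u, 0 ≤ G w r u := (A1 w r hbd hwr hGood.1.2).mp hGood.2
  have hG' : ∀ u, 0 ≤ G w' r u := by
    intro u; rw [tG w w' r hbd hwr hw'r hagree]; exact hG u
  have hmono : ∀ t, w t ≤ w' t := by
    intro t
    by_cases ht : t = r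
    · subst ht; omega
    · rw [hagree t ht]
  have hnoco : ∀ u, u < r → ¬ Conorm w' u :=
    (A2 w' r (hbd' w w' r hbd hwr hw'r hagree) hw'r hG').mpr
      (fun u hu => by rw [tS w w' r hbd hwr hw'r hagree]; exact hGood.1.2 u hu)
  intro s
  by_cases hs : s = r
  · subst hs
    exact iff_of_true ⟨hw'r, hG'⟩ (Or.inl rfl)
  · rw [or_iff_right hs]
    rcases lt_or_gt_of_ne hs with hlt | hgt
    · constructor
      · intro hC; exact absurd hC (hnoco s hlt)
      · intro hC
        exfalso
        refine hnoco s hlt ⟨by rw [hagree s hs]; exact hC.1, fun u => ?_⟩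
        calc (0:ℤ) ≤ G w s u := hC.2 u
        _ ≤ G w' s u := Finset.sum_le_sum (fun t _ => hmono t)
    · constructor
      · rintro ⟨h1, h2⟩
        refine ⟨by rw [← hagree s hs]; exact h1, fun u => ?_⟩
        rw [← G_agree w w' r hagree (by simp; omega)]
        exact h2 u
      · rintro ⟨h1, h2⟩
        refine ⟨by rw [hagree s hs]; exact h1, fun u => ?_⟩
        rw [G_agree w w' r hagree (by simp; omega)]
        exact h2 u

end Update

def word (p : ℕ) (i : ZMod p) (l : ℕ → ℕ) (t : ℕ) : ℤ :=
  if Addb l t ∧ addRes p l t = i then 1 else if Rem l t ∧ remRes p l t = i then -1 else 0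

lemma word_bd (p : ℕ) (i : ZMod p) (l : ℕ → ℕ) (t : ℕ) :
    word p i l t = -1 ∨ word p i l t = 0 ∨ word p i l t = 1 := by
  unfold word; split_ifs <;> simp

lemma addRes_eq (p : ℕ) (l : ℕ → ℕ) (t : ℕ) :
    addRes p l t = remRes p l t + 1 := by
  unfold addRes remRes; ring

lemma not_both (p : ℕ) (i : ZMod p) (hp1 : (1:ZMod p) ≠ 0) (l : ℕ → ℕ) (t : ℕ) :
    ¬((Addb l t ∧ addRes p l t = i) ∧ (Rem l t ∧ remRes p l t = i)) := by
  rintro ⟨⟨-, h1⟩, ⟨-, h2⟩⟩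
  rw [addRes_eq, h2] at h1
  exact hp1 (by linear_combination h1)

lemma word_eq_one (p : ℕ) (i : ZMod p) (l : ℕ → ℕ) (t : ℕ) :
    word p i l t = 1 ↔ (Addb l t ∧ addRes p l t = i) := by
  unfold word
  split_ifs with h1 h2
  · simp [h1]
  · simp [h1]
  · simp [h1]

lemma word_eq_neg_one (p : ℕ) (i : ZMod p) (hp1 : (1:ZMod p) ≠ 0) (l : ℕ → ℕ) (t : ℕ) :
    word p i l t = -1 ↔ (Rem l t ∧ remRes p l t = i) := by
  unfold word
  split_ifs with h1 h2
  · have h2 : ¬(Rem l t ∧ remRes p l t = i) := fun h => not_both p i hp1 l t ⟨h1, h⟩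
    simp [h2]
  · simp [h2]
  · simp [h2]

lemma word_sum (p : ℕ) (i : ZMod p) (hp1 : (1:ZMod p) ≠ 0) (l : ℕ → ℕ) (F : Finset ℕ) :
    ∑ t ∈ F, word p i l t
      = ((F.filter (fun t => Addb l t ∧ addRes p l t = i)).card : ℤ)
        - ((F.filter (fun t => Rem l t ∧ remRes p l t = i)).card : ℤ) := by
  rw [← Finset.sum_boole, ← Finset.sum_boole, ← Finset.sum_sub_distrib]
  refine Finset.sum_congr rfl (fun t _ => ?_)
  unfold word
  by_cases h1 : Addb l t ∧ addRes p l t = i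
  · have h2 : ¬(Rem l t ∧ remRes p l t = i) := fun h => not_both p i hp1 l t ⟨h1, h⟩
    simp [h1, h2]
  · by_cases h2 : Rem l t ∧ remRes p l t = i <;> simp [h1, h2]

lemma normal_iff (p : ℕ) (i : ZMod p) (hp1 : (1:ZMod p) ≠ 0) (l : ℕ → ℕ) (s : ℕ) :
    (NormalNode p l s ∧ remRes p l s = i) ↔ Norm (word p i l) s := by
  constructor
  · rintro ⟨⟨hrem, hcard⟩, hres⟩
    refine ⟨(word_eq_neg_one p i hp1 l s).mpr ⟨hrem, hres⟩, fun u hu => ?_⟩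
    have h := hcard u hu
    simp only [hres] at h
    rw [S, word_sum p i hp1]
    have := (Nat.cast_le (α := ℤ)).mpr h
    omega
  · rintro ⟨h1, h2⟩
    obtain ⟨hrem, hres⟩ := (word_eq_neg_one p i hp1 l s).mp h1
    refine ⟨⟨hrem, fun u hu => ?_⟩, hres⟩
    have h := h2 u hu
    rw [S, word_sum p i hp1] at h
    simp only [hres]
    exact (Nat.cast_le (α := ℤ)).mp (by omega)

lemma conormal_iff (p : ℕ) (i : ZMod p) (hp1 : (1:ZMod p) ≠ 0) (l : ℕ → ℕ) (s : ℕ) :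
    (ConormalNode p l s ∧ addRes p l s = i) ↔ Conorm (word p i l) s := by
  constructor
  · rintro ⟨⟨hadd, hcard⟩, hres⟩
    refine ⟨(word_eq_one p i l s).mpr ⟨hadd, hres⟩, fun u => ?_⟩
    have h := hcard u
    simp only [hres] at h
    rw [G, word_sum p i hp1]
    have := (Nat.cast_le (α := ℤ)).mpr h
    omega
  · rintro ⟨h1, h2⟩
    obtain ⟨hadd, hres⟩ := (word_eq_one p i l s).mp h1
    refine ⟨⟨hadd, fun u => ?_⟩, hres⟩
    have h := h2 u
    rw [G, word_sum p i hp1] at h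
    simp only [hres]
    exact (Nat.cast_le (α := ℤ)).mp (by omega)

lemma word_update (p : ℕ) (i : ZMod p) (hp1 : (1:ZMod p) ≠ 0) (l m : ℕ → ℕ) (r : ℕ)
    (hmono : ∀ t, l (t+1) ≤ l t) (hrem : Rem l r) (hres : remRes p l r = i)
    (hm : m = Function.update l r (l r - 1)) :
    word p i m = Function.update (word p i l) r 1 := by
  have hlr1 : 1 ≤ l r := by unfold Rem at hrem; omega
  have hmr : m r = l r - 1 := by rw [hm, Function.update_self]
  have hmt : ∀ t, t ≠ r → m t = l t := fun t ht => by rw [hm, Function.update_of_ne ht]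
  have hcast : ((l r - 1 : ℕ) : ZMod p) = (l r : ZMod p) - 1 := by
    push_cast [Nat.cast_sub hlr1]; ring
  funext t
  by_cases ht : t = r
  · subst ht
    rw [Function.update_self]
    apply (word_eq_one p i m t).mpr
    constructor
    · unfold Addb
      rcases Nat.eq_zero_or_pos t with h0 | hpos
      · exact Or.inl h0
      · right
        have h1 : m (t-1) = l (t-1) := hmt _ (by omega)
        have h2 : l t ≤ l (t-1) := by
          have h3 := hmono (t-1); rwa [show t - 1 + 1 = t by omega] at h3
        omega
    · unfold addRes
      rw [hmr, hcast, ← hres]; unfold remRes; ring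
  · rw [Function.update_of_ne ht]
    have hresA : addRes p m t = addRes p l t := by unfold addRes; rw [hmt t ht]
    have hresR : remRes p m t = remRes p l t := by unfold remRes; rw [hmt t ht]
    have hA : (Addb m t ∧ addRes p m t = i) ↔ (Addb l t ∧ addRes p l t = i) := by
      rw [hresA]
      by_cases ht1 : t = r + 1
      · subst ht1
        by_cases hres' : addRes p l (r+1) = i
        · simp only [hres', and_true]
          have hzm : (l (r+1) : ZMod p) = (l r : ZMod p) := by
            unfold addRes at hres'; unfold remRes at hres
            have := hres'.trans hres.symm
            push_cast at this
            linear_combination this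
          have hne : l (r+1) ≠ l r - 1 := by
            intro h
            apply hp1
            have hc : ((l (r+1) : ℕ) : ZMod p) = ((l r - 1 : ℕ) : ZMod p) := by rw [h]
            rw [hcast] at hc
            linear_combination hc - hzm
          unfold Addb Rem at *
          constructor
          · rintro (h | h)
            · omega
            · right
              simp only [Nat.add_sub_cancel] at h ⊢
              rw [hmt (r+1) ht, hmr] at h
              omega
          · rintro (h | h)
            · omega
            · right
              simp only [Nat.add_sub_cancel] at h ⊢
              rw [hmt (r+1) ht, hmr]
              omega
        · simp [hres']
      · have : Addb m t ↔ Addb l t := by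
          unfold Addb
          rcases Nat.eq_zero_or_pos t with h0 | hpos
          · simp [h0]
          · have e1 : m t = l t := hmt t ht
            have e2 : m (t-1) = l (t-1) := hmt _ (by omega)
            rw [e1, e2]
        rw [this]
    have hR : (Rem m t ∧ remRes p m t = i) ↔ (Rem l t ∧ remRes p l t = i) := by
      rw [hresR]
      by_cases ht1 : t + 1 = r
      · subst ht1
        by_cases hres'' : remRes p l t = i
        · simp only [hres'', and_true]
          have hzm : (l t : ZMod p) = (l (t+1) : ZMod p) - 1 := by
            unfold remRes at hres'' hres
            have h2 := hres''.trans hres.symm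
            push_cast at h2
            linear_combination h2
          have hle : l (t+1) ≤ l t := hmono t
          have hne : l t ≠ l (t+1) := by
            intro h
            apply hp1
            rw [h] at hzm
            linear_combination hzm
          unfold Rem
          have e1 : m t = l t := hmt t ht
          have e2 : m (t+1) = l (t+1) - 1 := hmr
          rw [e1, e2]
          omega
        · simp [hres'']
      · have : Rem m t ↔ Rem l t := by
          unfold Rem
          rw [hmt t ht, hmt (t+1) (by omega)]
        rw [this]
    unfold word
    simp only [hA, hR]


lemma forward (p : ℕ) (i : ZMod p) (hp1 : (1:ZMod p) ≠ 0) (l m : ℕ → ℕ)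
    (hlmono : ∀ t, l (t+1) ≤ l t) (r : ℕ) (hg : GoodRow p l i r)
    (hm : m = Function.update l r (l r - 1)) :
    CogoodRow p m i r ∧ l = Function.update m r (m r + 1) := by
  obtain ⟨hN, hres, hno⟩ := hg
  have hrem : Rem l r := hN.1
  have hlr1 : 1 ≤ l r := by unfold Rem at hrem; omega
  have hmr : m r = l r - 1 := by rw [hm, Function.update_self]
  have hw : word p i m = Function.update (word p i l) r 1 :=
    word_update p i hp1 l m r hlmono hrem hres hm
  have hwr : word p i l r = -1 := (word_eq_neg_one p i hp1 l r).mpr ⟨hrem, hres⟩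
  have hw'r : word p i m r = 1 := by rw [hw, Function.update_self]
  have hagree : ∀ t, t ≠ r → word p i m t = word p i l t := fun t ht => by
    rw [hw, Function.update_of_ne ht]
  have hgood : Good (word p i l) r := by
    refine ⟨(normal_iff p i hp1 l r).mp ⟨hN, hres⟩, fun s hs hns => ?_⟩
    exact hno s hs ((normal_iff p i hp1 l s).mpr hns)
  have hcog : Cogood (word p i m) r :=
    (goodCogood (word p i l) (word p i m) r (word_bd p i l) hwr hw'r hagree).mp hgood
  constructor
  · obtain ⟨hc, hnoc⟩ := hcog
    obtain ⟨h1, h2⟩ := (conormal_iff p i hp1 m r).mpr hc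
    exact ⟨h1, h2, fun s hs hcs => hnoc s hs ((conormal_iff p i hp1 m s).mp hcs)⟩
  · funext t
    by_cases ht : t = r
    · subst ht; rw [Function.update_self]; omega
    · rw [Function.update_of_ne ht, hm, Function.update_of_ne ht]

lemma backward (p : ℕ) (i : ZMod p) (hp1 : (1:ZMod p) ≠ 0) (l m : ℕ → ℕ)
    (hmmono : ∀ t, m (t+1) ≤ m t) (r : ℕ) (hc : CogoodRow p m i r)
    (hl : l = Function.update m r (m r + 1)) :
    GoodRow p l i r ∧ m = Function.update l r (l r - 1) := by
  obtain ⟨hC, hres, hnoc⟩ := hc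
  have hadd : Addb m r := hC.1
  have hlr : l r = m r + 1 := by rw [hl, Function.update_self]
  have hlt : ∀ t, t ≠ r → l t = m t := fun t ht => by rw [hl, Function.update_of_ne ht]
  have hlmono : ∀ t, l (t+1) ≤ l t := by
    intro t
    by_cases h1 : t = r
    · subst h1
      rw [hlt (t+1) (by omega), hlr]
      have := hmmono t; omega
    · by_cases h2 : t + 1 = r
      · rw [h2, hlr, hlt t h1]
        have : m r < m (r - 1) := by
          rcases hadd with h | h
          · omega
          · exact h
        rw [show r - 1 = t by omega] at this
        omega
      · rw [hlt (t+1) h2, hlt t h1]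
        exact hmmono t
  have hrem : Rem l r := by
    unfold Rem
    rw [hlt (r+1) (by omega), hlr]
    have := hmmono r; omega
  have hres' : remRes p l r = i := by
    unfold remRes
    rw [hlr, ← hres]
    unfold addRes
    push_cast
    ring
  have hm : m = Function.update l r (l r - 1) := by
    funext t
    by_cases ht : t = r
    · subst ht; rw [Function.update_self]; omega
    · rw [Function.update_of_ne ht, hlt t ht]
  have hw : word p i m = Function.update (word p i l) r 1 :=
    word_update p i hp1 l m r hlmono hrem hres' hm
  have hwr : word p i l r = -1 := (word_eq_neg_one p i hp1 l r).mpr ⟨hrem, hres'⟩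
  have hw'r : word p i m r = 1 := by rw [hw, Function.update_self]
  have hagree : ∀ t, t ≠ r → word p i m t = word p i l t := fun t ht => by
    rw [hw, Function.update_of_ne ht]
  have hcog : Cogood (word p i m) r := by
    refine ⟨(conormal_iff p i hp1 m r).mp ⟨hC, hres⟩, fun s hs hcs => ?_⟩
    exact hnoc s hs ((conormal_iff p i hp1 m s).mpr hcs)
  have hgood : Good (word p i l) r :=
    (goodCogood (word p i l) (word p i m) r (word_bd p i l) hwr hw'r hagree).mpr hcog
  refine ⟨?_, hm⟩
  obtain ⟨hn, hnon⟩ := hgood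
  obtain ⟨h1, h2⟩ := (normal_iff p i hp1 l r).mpr hn
  exact ⟨h1, h2, fun s hs hns => hnon s hs ((normal_iff p i hp1 l s).mp hns)⟩

lemma counts (p : ℕ) (i : ZMod p) (hp1 : (1:ZMod p) ≠ 0) (l m : ℕ → ℕ)
    (hlmono : ∀ t, l (t+1) ≤ l t)
    (N : ℕ) (hlN : ∀ t, N ≤ t → l t = 0)
    (r : ℕ) (hg : GoodRow p l i r) (hm : m = Function.update l r (l r - 1)) :
    {s | NormalNode p m s ∧ remRes p m s = i}.ncard + 1 =
      {s | NormalNode p l s ∧ remRes p l s = i}.ncard ∧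
    {s | ConormalNode p m s ∧ addRes p m s = i}.ncard =
      {s | ConormalNode p l s ∧ addRes p l s = i}.ncard + 1 := by
  obtain ⟨hN, hres, hno⟩ := hg
  have hrem : Rem l r := hN.1
  have hw : word p i m = Function.update (word p i l) r 1 :=
    word_update p i hp1 l m r hlmono hrem hres hm
  have hwr : word p i l r = -1 := (word_eq_neg_one p i hp1 l r).mpr ⟨hrem, hres⟩
  have hw'r : word p i m r = 1 := by rw [hw, Function.update_self]
  have hagree : ∀ t, t ≠ r → word p i m t = word p i l t := fun t ht => by
    rw [hw, Function.update_of_ne ht]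
  have hgood : Good (word p i l) r := by
    refine ⟨(normal_iff p i hp1 l r).mp ⟨hN, hres⟩, fun s hs hns => ?_⟩
    exact hno s hs ((normal_iff p i hp1 l s).mpr hns)
  have hb1 := B1 (word p i l) (word p i m) r (word_bd p i l) hwr hw'r hagree hgood
  have hb2 := B2 (word p i l) (word p i m) r (word_bd p i l) hwr hw'r hagree hgood
  have hfinN : {s | Norm (word p i l) s}.Finite := by
    apply Set.Finite.subset (Set.finite_Iio N)
    intro s hs
    obtain ⟨hrm, -⟩ := (word_eq_neg_one p i hp1 l s).mp hs.1
    unfold Rem at hrm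
    simp only [Set.mem_Iio]
    by_contra h
    rw [hlN s (by omega)] at hrm
    omega
  have hfinC : {s | Conorm (word p i l) s}.Finite := by
    apply Set.Finite.subset (Set.finite_Iic N)
    intro s hs
    obtain ⟨had, -⟩ := (word_eq_one p i l s).mp hs.1
    simp only [Set.mem_Iic]
    by_contra h
    push_neg at h
    rcases had with h0 | hlt
    · omega
    · rw [hlN s (by omega), hlN (s-1) (by omega)] at hlt
      omega
  constructor
  · have e1 : {s | NormalNode p m s ∧ remRes p m s = i} = {s | Norm (word p i l) s} \ {r} := by
      ext s
      rw [Set.mem_setOf_eq, normal_iff p i hp1 m s, hb1 s]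
      simp [Set.mem_diff]
    have e2 : {s | NormalNode p l s ∧ remRes p l s = i} = {s | Norm (word p i l) s} :=
      Set.ext (fun s => normal_iff p i hp1 l s)
    rw [e1, e2]
    exact Set.ncard_diff_singleton_add_one hgood.1 hfinN
  · have e1 : {s | ConormalNode p m s ∧ addRes p m s = i}
        = insert r {s | Conorm (word p i l) s} := by
      ext s
      rw [Set.mem_setOf_eq, conormal_iff p i hp1 m s, hb2 s]
      simp [Set.mem_insert_iff]
    have e2 : {s | ConormalNode p l s ∧ addRes p l s = i} = {s | Conorm (word p i l) s} :=
      Set.ext (fun s => conormal_iff p i hp1 l s)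
    have hrn : r ∉ {s | Conorm (word p i l) s} := by
      intro h
      rw [Set.mem_setOf_eq, Conorm, hwr] at h
      omega
    rw [e1, e2]
    exact Set.ncard_insert_of_notMem hrn hfinC

end Stmt14Aux

/-- Let `λ` (= `l`) be a `p`-regular partition of `n` and `ν` (= `m`) a `p`-regular
partition of `n - 1`.  Then `ν` is obtained from `λ` by removing the `i`-good node iff
`λ` is obtained from `ν` by adding the `i`-cogood node; in this case
`ε_i(ν) = ε_i(λ) - 1` and `φ_i(ν) = φ_i(λ) + 1`. -/
theorem stmt14 (p : ℕ) (hp : p.Prime) (i : ZMod p) (n : ℕ)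
    (l m : ℕ → ℕ)
    (hlmono : ∀ r, l (r + 1) ≤ l r) (hmmono : ∀ r, m (r + 1) ≤ m r)
    (N : ℕ) (hlN : ∀ r, N ≤ r → l r = 0) (hmN : ∀ r, N ≤ r → m r = 0)
    (hlreg : ∀ r, l (r + (p - 1)) = l r → l r = 0)
    (hmreg : ∀ r, m (r + (p - 1)) = m r → m r = 0)
    (hln : ∑ r ∈ Finset.range N, l r = n)
    (hmn : (∑ r ∈ Finset.range N, m r) + 1 = n) :
    ((∃ r, GoodRow p l i r ∧ m = Function.update l r (l r - 1)) ↔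
      (∃ r, CogoodRow p m i r ∧ l = Function.update m r (m r + 1))) ∧
    ((∃ r, GoodRow p l i r ∧ m = Function.update l r (l r - 1)) →
      {s | NormalNode p m s ∧ remRes p m s = i}.ncard + 1 =
        {s | NormalNode p l s ∧ remRes p l s = i}.ncard ∧
      {s | ConormalNode p m s ∧ addRes p m s = i}.ncard =
        {s | ConormalNode p l s ∧ addRes p l s = i}.ncard + 1) := by
  haveI := Fact.mk hp
  have hp1 : (1 : ZMod p) ≠ 0 := one_ne_zero
  constructor
  · constructor
    · rintro ⟨r, hg, hm⟩
      exact ⟨r, Stmt14Aux.forward p i hp1 l m hlmono r hg hm⟩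
    · rintro ⟨r, hc, hl⟩
      exact ⟨r, Stmt14Aux.backward p i hp1 l m hmmono r hc hl⟩
  · rintro ⟨r, hg, hm⟩
    exact Stmt14Aux.counts p i hp1 l m hlmono N hlN r hg hm
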